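/- Let U ⊆ ℂ² ⊗ ℂ³ be a 2-dimensional complex linear subspace. Then U has exactly two decomposable directions if and only if there exist a basis (h₁, h₂) of ℂ² and linearly independent vectors x, x′ ∈ ℂ³ such that U is spanned by h₁ ⊗ x and h₂ ⊗ x′. -/

import Mathlib

open Matrix

/-- A nonzero element of `ℂ² ⊗ ℂ³`, viewed as a 2×3 complex matrix, is decomposable if it
is an outer product `h ⊗ x` with `h ≠ 0` and `x ≠ 0` (equivalently, it has rank 1). -/
def Decomposable (A : Matrix (Fin 2) (Fin 3) ℂ) : Prop :=
  ∃ (h : Fin 2 → ℂ) (x : Fin 3 → ℂ), h ≠ 0 ∧ x ≠ 0 ∧ A = vecMulVec h x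

/-- The decomposable directions of a subspace `U ⊆ ℂ² ⊗ ℂ³`: the 1-dimensional subspaces
of `U` spanned by decomposable elements. -/
def decDirections (U : Submodule ℂ (Matrix (Fin 2) (Fin 3) ℂ)) :
    Set (Submodule ℂ (Matrix (Fin 2) (Fin 3) ℂ)) :=
  {D | ∃ A : Matrix (Fin 2) (Fin 3) ℂ,
    A ∈ U ∧ A ≠ 0 ∧ Decomposable A ∧ D = Submodule.span ℂ {A}}

private lemma aux_vmv_ne_zero {h : Fin 2 → ℂ} {x : Fin 3 → ℂ} (hh : h ≠ 0) (hx : x ≠ 0) :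
    vecMulVec h x ≠ 0 := by
  obtain ⟨i, hi⟩ := Function.ne_iff.mp hh
  obtain ⟨j, hj⟩ := Function.ne_iff.mp hx
  intro H
  have := congrFun (congrFun H i) j
  simp only [vecMulVec_apply, Matrix.zero_apply] at this
  rcases mul_eq_zero.mp this with h' | h'
  · exact hi (by simpa using h')
  · exact hj (by simpa using h')

private lemma aux_add_left (h h' : Fin 2 → ℂ) (x : Fin 3 → ℂ) :
    vecMulVec (h + h') x = vecMulVec h x + vecMulVec h' x := by
  ext i j; simp [vecMulVec_apply]; ring

private lemma aux_add_right (h : Fin 2 → ℂ) (x x' : Fin 3 → ℂ) :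
    vecMulVec h (x + x') = vecMulVec h x + vecMulVec h x' := by
  ext i j; simp [vecMulVec_apply]; ring

private lemma aux_smul_right (c : ℂ) (h : Fin 2 → ℂ) (x : Fin 3 → ℂ) :
    vecMulVec h (c • x) = vecMulVec (c • h) x := by
  ext i j; simp [vecMulVec_apply]; ring

private lemma aux_vmv_zero_left (x : Fin 3 → ℂ) : vecMulVec (0 : Fin 2 → ℂ) x = 0 := by
  ext i j; simp [vecMulVec_apply]

private lemma aux_vmv_zero_right (h : Fin 2 → ℂ) : vecMulVec h (0 : Fin 3 → ℂ) = 0 := by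
  ext i j; simp [vecMulVec_apply]

private lemma aux_dep {n : ℕ} {v w : Fin n → ℂ} (hv : v ≠ 0) (hw : w ≠ 0)
    (h : ¬ LinearIndependent ℂ ![v, w]) : ∃ c : ℂ, c ≠ 0 ∧ w = c • v := by
  have h' : ¬ ((w : Fin n → ℂ) ≠ 0 ∧ ∀ a : ℂ, a • w ≠ v) := by
    intro H
    exact h (linearIndependent_fin2.mpr (by simpa using H))
  push_neg at h'
  obtain ⟨a, ha⟩ := h' hw
  have ha0 : a ≠ 0 := by
    rintro rfl
    rw [zero_smul] at ha
    exact hv ha.symm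
  refine ⟨a⁻¹, inv_ne_zero ha0, ?_⟩
  rw [← ha, smul_smul, inv_mul_cancel₀ ha0, one_smul]

/-- Key lemma: in the span of `h₁⊗x` and `h₂⊗x'` with independent factors, a decomposable
element has one coefficient zero. -/
private lemma aux_key {h₁ h₂ : Fin 2 → ℂ} {x x' : Fin 3 → ℂ}
    (hh : LinearIndependent ℂ ![h₁, h₂]) (hx : LinearIndependent ℂ ![x, x'])
    {a b : ℂ} {h : Fin 2 → ℂ} {y : Fin 3 → ℂ} (hy : y ≠ 0)
    (hM : a • vecMulVec h₁ x + b • vecMulVec h₂ x' = vecMulVec h y) :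
    a = 0 ∨ b = 0 := by
  by_contra hab
  push_neg at hab
  obtain ⟨ha, hb⟩ := hab
  have hcard : Fintype.card (Fin 2) = Module.finrank ℂ (Fin 2 → ℂ) := by simp
  set B := basisOfLinearIndependentOfCardEqFinrank hh hcard with hBdef
  have hB : ⇑B = ![h₁, h₂] := coe_basisOfLinearIndependentOfCardEqFinrank hh hcard
  have hB0 : B 0 = h₁ := by rw [hB]; simp
  have hB1 : B 1 = h₂ := by rw [hB]; simp
  have hc00 : B.coord 0 h₁ = 1 := by
    rw [← hB0, Module.Basis.coord_apply, B.repr_self]; simp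
  have hc01 : B.coord 0 h₂ = 0 := by
    rw [← hB1, Module.Basis.coord_apply, B.repr_self]; simp
  have hc10 : B.coord 1 h₁ = 0 := by
    rw [← hB0, Module.Basis.coord_apply, B.repr_self]; simp
  have hc11 : B.coord 1 h₂ = 1 := by
    rw [← hB1, Module.Basis.coord_apply, B.repr_self]; simp
  have hcol : ∀ j, (a * x j) • h₁ + (b * x' j) • h₂ = (y j) • h := by
    intro j
    funext i
    have h1 := congrFun (congrFun hM i) j
    simp only [Matrix.add_apply, Matrix.smul_apply, vecMulVec_apply, smul_eq_mul] at h1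
    simp only [Pi.add_apply, Pi.smul_apply, smul_eq_mul]
    linear_combination h1
  have hx0 : ∀ j, a * x j = y j * (B.repr h) 0 := by
    intro j
    have h2 := congrArg (B.coord 0) (hcol j)
    rw [map_add, LinearMap.map_smul, LinearMap.map_smul, LinearMap.map_smul, hc00, hc01] at h2
    simpa using h2
  have hx1 : ∀ j, b * x' j = y j * (B.repr h) 1 := by
    intro j
    have h2 := congrArg (B.coord 1) (hcol j)
    rw [map_add, LinearMap.map_smul, LinearMap.map_smul, LinearMap.map_smul, hc10, hc11] at h2
    simpa using h2
  set s : ℂ := a⁻¹ * (B.repr h) 0 with hs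
  set t : ℂ := b⁻¹ * (B.repr h) 1 with ht
  have hxs : x = s • y := by
    funext j
    have := hx0 j
    simp only [Pi.smul_apply, smul_eq_mul, hs]
    field_simp
    linear_combination this
  have hxt : x' = t • y := by
    funext j
    have := hx1 j
    simp only [Pi.smul_apply, smul_eq_mul, ht]
    field_simp
    linear_combination this
  have hzero : t • x + (-s) • x' = 0 := by
    rw [hxs, hxt, smul_smul, smul_smul, ← add_smul,
      show t * s + -s * t = 0 by ring, zero_smul]
  have hst := LinearIndependent.pair_iff.mp hx t (-s) hzero
  have hs0 : s = 0 := neg_eq_zero.mp hst.2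
  have hx00 : x = 0 := by rw [hxs, hs0, zero_smul]
  exact absurd hx00 (by simpa using hx.ne_zero 0)

private lemma aux_li {h₁ h₂ : Fin 2 → ℂ} {x x' : Fin 3 → ℂ}
    (hh : LinearIndependent ℂ ![h₁, h₂]) (hx : LinearIndependent ℂ ![x, x']) :
    LinearIndependent ℂ ![vecMulVec h₁ x, vecMulVec h₂ x'] := by
  have hx0 : x ≠ 0 := by simpa using hx.ne_zero 0
  have hx'0 : x' ≠ 0 := by simpa using hx.ne_zero 1
  have hh1 : h₁ ≠ 0 := by simpa using hh.ne_zero 0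
  have hh2 : h₂ ≠ 0 := by simpa using hh.ne_zero 1
  rw [LinearIndependent.pair_iff]
  intro s t hst
  have hM : s • vecMulVec h₁ x + t • vecMulVec h₂ x' = vecMulVec (0 : Fin 2 → ℂ) x := by
    rw [aux_vmv_zero_left, hst]
  rcases aux_key hh hx hx0 hM with rfl | rfl
  · rw [zero_smul, zero_add] at hst
    exact ⟨rfl, (smul_eq_zero.mp hst).resolve_right (aux_vmv_ne_zero hh2 hx'0)⟩
  · rw [zero_smul, add_zero] at hst
    exact ⟨(smul_eq_zero.mp hst).resolve_right (aux_vmv_ne_zero hh1 hx0), rfl⟩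

private lemma aux_pair_li {M : Type*} [AddCommGroup M] [Module ℂ M] {A B : M}
    (hA : A ≠ 0) (hB : B ≠ 0)
    (hspan : Submodule.span ℂ {A} ≠ Submodule.span ℂ {B}) :
    LinearIndependent ℂ ![A, B] := by
  rw [LinearIndependent.pair_iff]
  intro s t hst
  rcases eq_or_ne s 0 with rfl | hs
  · rw [zero_smul, zero_add] at hst
    exact ⟨rfl, (smul_eq_zero.mp hst).resolve_right hB⟩
  · exfalso
    apply hspan
    have h2 : A + (s⁻¹ * t) • B = 0 := by
      have := congrArg (s⁻¹ • ·) hst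
      simpa [smul_add, smul_smul, inv_mul_cancel₀ hs] using this
    have hA' : A = (-(s⁻¹ * t)) • B := by
      rw [neg_smul]
      exact eq_neg_of_add_eq_zero_left h2
    have hc : (-(s⁻¹ * t)) ≠ 0 := by
      intro h0
      rw [h0, zero_smul] at hA'
      exact hA hA'
    rw [hA', Submodule.span_singleton_smul_eq (isUnit_iff_ne_zero.mpr hc)]

/-- A 2-dimensional subspace `U ⊆ ℂ² ⊗ ℂ³` has exactly two decomposable directions if and only
if there are a basis `(h₁, h₂)` of `ℂ²` and linearly independent `x, x' ∈ ℂ³` such that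
`U = span {h₁ ⊗ x, h₂ ⊗ x'}`. -/
theorem stmt_7 (U : Submodule ℂ (Matrix (Fin 2) (Fin 3) ℂ))
    (hU : Module.finrank ℂ U = 2) :
    (∃ D₁ D₂ : Submodule ℂ (Matrix (Fin 2) (Fin 3) ℂ),
      D₁ ≠ D₂ ∧ decDirections U = {D₁, D₂}) ↔
    (∃ (h₁ h₂ : Fin 2 → ℂ) (x x' : Fin 3 → ℂ),
      LinearIndependent ℂ ![h₁, h₂] ∧ LinearIndependent ℂ ![x, x'] ∧
      U = Submodule.span ℂ {vecMulVec h₁ x, vecMulVec h₂ x'}) := by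
  constructor
  · rintro ⟨D₁, D₂, hne, hset⟩
    have hD₁ : D₁ ∈ decDirections U := by rw [hset]; left; rfl
    have hD₂ : D₂ ∈ decDirections U := by rw [hset]; right; rfl
    obtain ⟨A₁, hA₁U, hA₁0, ⟨g₁, y₁, hg₁, hy₁, hA₁e⟩, hD₁e⟩ := hD₁
    obtain ⟨A₂, hA₂U, hA₂0, ⟨g₂, y₂, hg₂, hy₂, hA₂e⟩, hD₂e⟩ := hD₂
    have hLI : LinearIndependent ℂ ![A₁, A₂] :=
      aux_pair_li hA₁0 hA₂0 (by rw [← hD₁e, ← hD₂e]; exact hne)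
    have hUspan : U = Submodule.span ℂ {A₁, A₂} := by
      have hle : Submodule.span ℂ {A₁, A₂} ≤ U :=
        Submodule.span_le.mpr
          (Set.insert_subset_iff.mpr ⟨hA₁U, Set.singleton_subset_iff.mpr hA₂U⟩)
      have hr : Set.range ![A₁, A₂] = {A₁, A₂} := by
        ext z; simp [Fin.exists_fin_two]; tauto
      have hfr : Module.finrank ℂ (Submodule.span ℂ ({A₁, A₂} :
          Set (Matrix (Fin 2) (Fin 3) ℂ))) = 2 := by
        rw [← hr]
        simpa using finrank_span_eq_card hLI
      exact (Submodule.eq_of_le_of_finrank_le hle (le_of_eq (by rw [hU, hfr]))).symm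
    have hdirs : ∀ A₃ : Matrix (Fin 2) (Fin 3) ℂ, A₃ = A₁ + A₂ → Decomposable A₃ → A₃ ≠ 0 →
        False := by
      intro A₃ h3 hdec h30
      have hmem : Submodule.span ℂ {A₃} ∈ decDirections U :=
        ⟨A₃, by rw [h3]; exact add_mem hA₁U hA₂U, h30, hdec, rfl⟩
      rw [hset] at hmem
      rcases hmem with hcase | hcase
      · have : A₃ ∈ Submodule.span ℂ {A₁} := by
          rw [← hD₁e, ← hcase]
          exact Submodule.mem_span_singleton_self _
        obtain ⟨c, hc⟩ := Submodule.mem_span_singleton.mp this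
        have h0 := (LinearIndependent.pair_iff.mp hLI (c - 1) (-1)
          (by rw [sub_smul, one_smul, neg_smul, one_smul, hc, h3]; abel)).2
        norm_num at h0
      · have : A₃ ∈ Submodule.span ℂ {A₂} := by
          rw [← hD₂e, ← hcase]
          exact Submodule.mem_span_singleton_self _
        obtain ⟨c, hc⟩ := Submodule.mem_span_singleton.mp this
        have h0 := (LinearIndependent.pair_iff.mp hLI (-1) (c - 1)
          (by rw [sub_smul, one_smul, neg_smul, one_smul, hc, h3]; abel)).1
        norm_num at h0
    by_cases hxLI : LinearIndependent ℂ ![y₁, y₂]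
    · by_cases hhLI : LinearIndependent ℂ ![g₁, g₂]
      · exact ⟨g₁, g₂, y₁, y₂, hhLI, hxLI, by rw [hUspan, hA₁e, hA₂e]⟩
      · exfalso
        obtain ⟨c, hc0, hc⟩ := aux_dep hg₁ hg₂ hhLI
        have he : A₁ + A₂ = vecMulVec g₁ (y₁ + c • y₂) := by
          rw [hA₁e, hA₂e, hc, aux_add_right, aux_smul_right]
        have hy0 : y₁ + c • y₂ ≠ 0 := by
          intro h0
          rw [h0, aux_vmv_zero_right] at he
          have := (LinearIndependent.pair_iff.mp hLI 1 1 (by rw [one_smul, one_smul, he])).1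
          norm_num at this
        exact hdirs (A₁ + A₂) rfl ⟨g₁, y₁ + c • y₂, hg₁, hy0, he⟩
          (by rw [he]; exact aux_vmv_ne_zero hg₁ hy0)
    · exfalso
      obtain ⟨c, hc0, hc⟩ := aux_dep hy₁ hy₂ hxLI
      have he : A₁ + A₂ = vecMulVec (g₁ + c • g₂) y₁ := by
        rw [hA₁e, hA₂e, hc, aux_smul_right, aux_add_left]
      have hg0 : g₁ + c • g₂ ≠ 0 := by
        intro h0
        rw [h0, aux_vmv_zero_left] at he
        have := (LinearIndependent.pair_iff.mp hLI 1 1 (by rw [one_smul, one_smul, he])).1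
        norm_num at this
      exact hdirs (A₁ + A₂) rfl ⟨g₁ + c • g₂, y₁, hg0, hy₁, he⟩
        (by rw [he]; exact aux_vmv_ne_zero hg0 hy₁)
  · rintro ⟨h₁, h₂, x, x', hh, hx, rfl⟩
    set A₁ := vecMulVec h₁ x with hA₁
    set A₂ := vecMulVec h₂ x' with hA₂
    have hh1 : h₁ ≠ 0 := by simpa using hh.ne_zero 0
    have hh2 : h₂ ≠ 0 := by simpa using hh.ne_zero 1
    have hx0 : x ≠ 0 := by simpa using hx.ne_zero 0
    have hx'0 : x' ≠ 0 := by simpa using hx.ne_zero 1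
    have hA₁0 : A₁ ≠ 0 := aux_vmv_ne_zero hh1 hx0
    have hA₂0 : A₂ ≠ 0 := aux_vmv_ne_zero hh2 hx'0
    have hLI := aux_li hh hx
    refine ⟨Submodule.span ℂ {A₁}, Submodule.span ℂ {A₂}, ?_, ?_⟩
    · intro hEq
      have : A₂ ∈ Submodule.span ℂ {A₁} := by
        rw [hEq]; exact Submodule.mem_span_singleton_self _
      obtain ⟨c, hc⟩ := Submodule.mem_span_singleton.mp this
      have h0 := (LinearIndependent.pair_iff.mp hLI c (-1)
        (by rw [neg_smul, one_smul, hc]; abel)).2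
      norm_num at h0
    · ext D
      simp only [decDirections, Set.mem_setOf_eq, Set.mem_insert_iff, Set.mem_singleton_iff]
      constructor
      · rintro ⟨A, hAU, hA0, ⟨h, y, hh0, hy0, rfl⟩, rfl⟩
        obtain ⟨a, b, hab⟩ := Submodule.mem_span_pair.mp hAU
        rcases aux_key hh hx hy0 hab with rfl | rfl
        · right
          rw [zero_smul, zero_add] at hab
          have hb : b ≠ 0 := by
            rintro rfl
            rw [zero_smul] at hab
            exact hA0 hab.symm
          rw [← hab, Submodule.span_singleton_smul_eq (isUnit_iff_ne_zero.mpr hb)]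
        · left
          rw [zero_smul, add_zero] at hab
          have ha : a ≠ 0 := by
            rintro rfl
            rw [zero_smul] at hab
            exact hA0 hab.symm
          rw [← hab, Submodule.span_singleton_smul_eq (isUnit_iff_ne_zero.mpr ha)]
      · rintro (rfl | rfl)
        · exact ⟨A₁, Submodule.subset_span (Set.mem_insert _ _), hA₁0,
            ⟨h₁, x, hh1, hx0, hA₁⟩, rfl⟩
        · exact ⟨A₂, Submodule.subset_span (Set.mem_insert_of_mem _ rfl), hA₂0,
            ⟨h₂, x', hh2, hx'0, hA₂⟩, rfl⟩
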